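/- Let X be a metric space, V a real vector space of finite dimension r, ρ a Glaeser operation, and E a bundle over X. Then the function a ↦ dim (ρ^{2r}(E))_a is upper-semicontinuous on X. -/

import Mathlib

/-- A bundle of linear subspaces of `V` over `X`: each fibre is a linear subspace. -/
def IsBundle {X V : Type*} [AddCommGroup V] [Module ℝ V] (E : Set (X × V)) : Prop :=
  ∀ a : X, ∃ S : Submodule ℝ V, {v : V | (a, v) ∈ E} = (S : Set V)

/-- A Glaeser operation on bundles of linear subspaces of `V` over `X`:
it maps bundles to bundles, contains the closure, and is local. -/
structure IsGlaeserOperation {X V : Type*} [MetricSpace X] [NormedAddCommGroup V]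
    [NormedSpace ℝ V] (ρ : Set (X × V) → Set (X × V)) : Prop where
  bundle : ∀ E : Set (X × V), IsBundle E → IsBundle (ρ E)
  closure_subset : ∀ E : Set (X × V), IsBundle E → closure E ⊆ ρ E
  isLocal : ∀ E F : Set (X × V), IsBundle E → IsBundle F → ∀ U : Set X, IsOpen U →
    (∀ a ∈ U, {v : V | (a, v) ∈ E} = {v : V | (a, v) ∈ F}) →
    ∀ a ∈ U, {v : V | (a, v) ∈ ρ E} = {v : V | (a, v) ∈ ρ F}

namespace GlaeserAux

open Module Metric Filter Topology

variable {X V : Type*} [MetricSpace X] [NormedAddCommGroup V] [NormedSpace ℝ V]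
  [FiniteDimensional ℝ V]

/-- The fibre of a bundle at a point. -/
def fib (E : Set (X × V)) (a : X) : Set V := {v : V | (a, v) ∈ E}

/-- The dimension of the span of the fibre. -/
noncomputable def dd (E : Set (X × V)) (a : X) : ℕ :=
  Module.finrank ℝ (Submodule.span ℝ (fib E a))

lemma span_fib_eq {E : Set (X × V)} (hE : IsBundle E) (a : X) :
    (Submodule.span ℝ (fib E a) : Set V) = fib E a := by
  obtain ⟨S, hS⟩ := hE a
  have h : fib E a = (S : Set V) := hS
  rw [h, Submodule.span_eq]

lemma iter_bundle {ρ : Set (X × V) → Set (X × V)} (hρ : IsGlaeserOperation ρ)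
    {E : Set (X × V)} (hE : IsBundle E) : ∀ k, IsBundle (ρ^[k] E)
  | 0 => hE
  | (k + 1) => by
      rw [Function.iterate_succ_apply']
      exact hρ.bundle _ (iter_bundle hρ hE k)

lemma iter_subset_succ {ρ : Set (X × V) → Set (X × V)} (hρ : IsGlaeserOperation ρ)
    {E : Set (X × V)} (hE : IsBundle E) (k : ℕ) : ρ^[k] E ⊆ ρ^[k + 1] E := by
  rw [Function.iterate_succ_apply']
  exact subset_closure.trans (hρ.closure_subset _ (iter_bundle hρ hE k))

/-- Key compactness lemma: near `x`, the fibre dimension of `ρ^[k] E` is bounded by the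
fibre dimension of `ρ^[k+1] E` at `x`. -/
lemma lemA {ρ : Set (X × V) → Set (X × V)} (hρ : IsGlaeserOperation ρ)
    {E : Set (X × V)} (hE : IsBundle E) (k : ℕ) (x : X) :
    ∃ δ > (0 : ℝ), ∀ y : X, dist y x < δ → dd (ρ^[k] E) y ≤ dd (ρ^[k + 1] E) x := by
  by_contra hcon
  push_neg at hcon
  set F := ρ^[k] E with hFdef
  have hF : IsBundle F := iter_bundle hρ hE k
  set s := dd (ρ^[k + 1] E) x + 1 with hs
  have hy : ∀ n : ℕ, ∃ y : X, dist y x < 1 / (n + 1) ∧ s ≤ dd F y := by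
    intro n
    obtain ⟨y, h1, h2⟩ := hcon (1 / (n + 1)) (by positivity)
    exact ⟨y, h1, by omega⟩
  choose y hy1 hy2 using hy
  set L : V ≃L[ℝ] EuclideanSpace ℝ (Fin (finrank ℝ V)) := toEuclidean with hL
  set T : ℕ → Submodule ℝ (EuclideanSpace ℝ (Fin (finrank ℝ V))) :=
    fun n => (Submodule.span ℝ (fib F (y n))).map
      (L.toLinearEquiv : V →ₗ[ℝ] EuclideanSpace ℝ (Fin (finrank ℝ V))) with hT
  have hTrank : ∀ n, s ≤ finrank ℝ (T n) := by
    intro n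
    rw [hT]
    rw [LinearEquiv.finrank_map_eq]
    exact hy2 n
  have hg : ∀ n, ∃ g : Fin s → EuclideanSpace ℝ (Fin (finrank ℝ V)),
      Orthonormal ℝ g ∧ ∀ i, g i ∈ T n := by
    intro n
    set B := stdOrthonormalBasis ℝ (T n) with hB
    refine ⟨fun i => (B (Fin.castLE (hTrank n) i) : EuclideanSpace ℝ (Fin (finrank ℝ V))),
      ?_, fun i => Submodule.coe_mem _⟩
    rw [orthonormal_iff_ite]
    intro i j
    rw [← Submodule.coe_inner]
    rw [orthonormal_iff_ite.mp B.orthonormal]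
    by_cases h : i = j
    · simp [h]
    · have : Fin.castLE (hTrank n) i ≠ Fin.castLE (hTrank n) j := by
        intro hcc
        exact h (Fin.castLE_injective _ hcc)
      simp [h, this]
  choose g hgON hgT using hg
  set K : Set (Fin s → EuclideanSpace ℝ (Fin (finrank ℝ V))) := {g | Orthonormal ℝ g} with hK
  have hKclosed : IsClosed K := by
    have hKeq : K = ⋂ (i : Fin s) (j : Fin s),
        {g : Fin s → EuclideanSpace ℝ (Fin (finrank ℝ V)) |
          (inner ℝ (g i) (g j) : ℝ) = if i = j then 1 else 0} := by
      ext gg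
      simp only [hK, Set.mem_setOf_eq, Set.mem_iInter, orthonormal_iff_ite]
    rw [hKeq]
    refine isClosed_iInter fun i => isClosed_iInter fun j => ?_
    exact isClosed_eq (Continuous.inner (continuous_apply i) (continuous_apply j))
      continuous_const
  have hKcpt : IsCompact K := by
    refine (isCompact_closedBall (0 : Fin s → EuclideanSpace ℝ (Fin (finrank ℝ V)))
      1).of_isClosed_subset hKclosed ?_
    intro gg hgg
    rw [mem_closedBall, dist_zero_right]
    refine (pi_norm_le_iff_of_nonneg zero_le_one).mpr fun i => ?_
    exact le_of_eq (hgg.1 i)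
  obtain ⟨ginf, hginfK, φ, hφ, hconv⟩ := hKcpt.tendsto_subseq (fun n => hgON n)
  have hyx : Tendsto (fun n => y (φ n)) atTop (𝓝 x) := by
    rw [Metric.tendsto_atTop]
    intro ε hε
    obtain ⟨N, hN⟩ := exists_nat_one_div_lt hε
    refine ⟨N, fun n hn => ?_⟩
    have h1 : dist (y (φ n)) x < 1 / (φ n + 1) := hy1 (φ n)
    have h2 : (1 : ℝ) / (φ n + 1) ≤ 1 / (N + 1) := by
      apply one_div_le_one_div_of_le (by positivity)
      have hnn : N ≤ φ n := le_trans hn hφ.le_apply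
      exact_mod_cast Nat.succ_le_succ hnn
    linarith
  have hmemρ : ∀ i : Fin s, L.symm (ginf i) ∈ fib (ρ^[k + 1] E) x := by
    intro i
    have hmemF : ∀ n, (y (φ n), L.symm (g (φ n) i)) ∈ F := by
      intro n
      obtain ⟨w, hw, hLw⟩ := hgT (φ n) i
      have hww : L.symm (g (φ n) i) = w := by
        rw [← hLw]
        exact L.symm_apply_apply w
      rw [hww]
      have hw' : w ∈ (Submodule.span ℝ (fib F (y (φ n))) : Set V) := hw
      rw [span_fib_eq hF] at hw'
      exact hw'
    have htend : Tendsto (fun n => (y (φ n), L.symm (g (φ n) i))) atTop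
        (𝓝 (x, L.symm (ginf i))) := by
      refine Tendsto.prodMk_nhds hyx ?_
      exact (L.symm.continuous.tendsto _).comp (tendsto_pi_nhds.mp hconv i)
    have hcl : (x, L.symm (ginf i)) ∈ closure F :=
      mem_closure_of_tendsto htend (Filter.Eventually.of_forall hmemF)
    have hsub : closure F ⊆ ρ F := hρ.closure_subset F hF
    show (x, L.symm (ginf i)) ∈ ρ^[k + 1] E
    rw [Function.iterate_succ_apply']
    exact hsub hcl
  have hli : LinearIndependent ℝ (fun i : Fin s => L.symm (ginf i)) := by
    have h1 : LinearIndependent ℝ ginf := (hginfK : Orthonormal ℝ ginf).linearIndependent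
    have h2 := h1.map' (L.symm.toLinearEquiv :
      EuclideanSpace ℝ (Fin (finrank ℝ V)) →ₗ[ℝ] V) L.symm.toLinearEquiv.ker
    exact h2
  have hle : Submodule.span ℝ (Set.range (fun i : Fin s => L.symm (ginf i))) ≤
      Submodule.span ℝ (fib (ρ^[k + 1] E) x) :=
    Submodule.span_mono (Set.range_subset_iff.mpr hmemρ)
  have hfin : s ≤ dd (ρ^[k + 1] E) x := by
    have h3 : finrank ℝ (Submodule.span ℝ
        (Set.range (fun i : Fin s => L.symm (ginf i)))) = s := by
      rw [finrank_span_eq_card hli, Fintype.card_fin]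
    rw [dd, ← h3]
    exact Submodule.finrank_mono hle
  omega

/-- Locality propagation: if consecutive iterates agree on an open set, all later iterates
agree there. -/
lemma stab {ρ : Set (X × V) → Set (X × V)} (hρ : IsGlaeserOperation ρ)
    {E : Set (X × V)} (hE : IsBundle E) (k : ℕ) (U : Set X) (hU : IsOpen U)
    (h : ∀ a ∈ U, fib (ρ^[k] E) a = fib (ρ^[k + 1] E) a) :
    ∀ j, ∀ a ∈ U, fib (ρ^[k + j] E) a = fib (ρ^[k] E) a := by
  intro j
  induction j with
  | zero => exact fun a _ => rfl
  | succ j ih =>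
    intro a ha
    have hfib : ∀ b ∈ U, {v : V | (b, v) ∈ ρ^[k + j] E} = {v : V | (b, v) ∈ ρ^[k] E} := ih
    have hloc := hρ.isLocal _ _ (iter_bundle hρ hE (k + j)) (iter_bundle hρ hE k) U hU hfib a ha
    show fib (ρ^[k + j + 1] E) a = fib (ρ^[k] E) a
    have e1 : ρ^[k + j + 1] E = ρ (ρ^[k + j] E) := Function.iterate_succ_apply' ρ (k + j) E
    have e2 : ρ^[k + 1] E = ρ (ρ^[k] E) := Function.iterate_succ_apply' ρ k E
    calc fib (ρ^[k + j + 1] E) a = fib (ρ (ρ^[k + j] E)) a := by rw [e1]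
      _ = fib (ρ (ρ^[k] E)) a := hloc
      _ = fib (ρ^[k + 1] E) a := by rw [e2]
      _ = fib (ρ^[k] E) a := (h a ha).symm

/-- Glaeser stabilization: if the fibre dimension at `x` after `2m+2` steps is at most `m`,
then near `x` the bundle stabilizes at step `2m`. -/
lemma keyP {ρ : Set (X × V) → Set (X × V)} (hρ : IsGlaeserOperation ρ)
    {E : Set (X × V)} (hE : IsBundle E) :
    ∀ m : ℕ, ∀ x : X, dd (ρ^[2 * m + 2] E) x ≤ m →
      ∃ δ > (0 : ℝ), ∀ y : X, dist y x < δ → ∀ j : ℕ,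
        fib (ρ^[2 * m + j] E) y = fib (ρ^[2 * m] E) y := by
  intro m
  induction m using Nat.strong_induction_on with
  | _ m ih =>
    intro x hx
    obtain ⟨δ, hδ, hball⟩ := lemA hρ hE (2 * m + 1) x
    have hfibeq : ∀ y : X, dist y x < δ → fib (ρ^[2 * m] E) y = fib (ρ^[2 * m + 1] E) y := by
      intro y hyd
      have h1 : dd (ρ^[2 * m + 1] E) y ≤ m := le_trans (hball y hyd) hx
      by_cases hc : dd (ρ^[2 * m + 1] E) y ≤ dd (ρ^[2 * m] E) y
      · have hsub : fib (ρ^[2 * m] E) y ⊆ fib (ρ^[2 * m + 1] E) y :=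
          fun v hv => iter_subset_succ hρ hE (2 * m) hv
        have hle : Submodule.span ℝ (fib (ρ^[2 * m] E) y) ≤
            Submodule.span ℝ (fib (ρ^[2 * m + 1] E) y) := Submodule.span_mono hsub
        have heq : Submodule.span ℝ (fib (ρ^[2 * m] E) y) =
            Submodule.span ℝ (fib (ρ^[2 * m + 1] E) y) :=
          Submodule.eq_of_le_of_finrank_le hle hc
        calc fib (ρ^[2 * m] E) y
            = (Submodule.span ℝ (fib (ρ^[2 * m] E) y) : Set V) :=
              (span_fib_eq (iter_bundle hρ hE _) y).symm
          _ = (Submodule.span ℝ (fib (ρ^[2 * m + 1] E) y) : Set V) := by rw [heq]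
          _ = fib (ρ^[2 * m + 1] E) y := span_fib_eq (iter_bundle hρ hE _) y
      · exfalso
        push_neg at hc
        have hm1 : 1 ≤ m := by omega
        have he2 : 2 * (m - 1) + 2 = 2 * m := by omega
        have he3 : 2 * (m - 1) + 3 = 2 * m + 1 := by omega
        have hy' : dd (ρ^[2 * (m - 1) + 2] E) y ≤ m - 1 := by
          rw [he2]; omega
        obtain ⟨δ', hδ', hb'⟩ := ih (m - 1) (by omega) y hy'
        have f2 := hb' y (by rw [dist_self]; exact hδ') 2
        have f3 := hb' y (by rw [dist_self]; exact hδ') 3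
        rw [he2] at f2
        rw [he3] at f3
        have hfeq : fib (ρ^[2 * m] E) y = fib (ρ^[2 * m + 1] E) y := f2.trans f3.symm
        have : dd (ρ^[2 * m] E) y = dd (ρ^[2 * m + 1] E) y := by
          show Module.finrank ℝ (Submodule.span ℝ (fib (ρ^[2 * m] E) y)) = _
          rw [hfeq]
          rfl
        omega
    refine ⟨δ, hδ, fun y hyd j => ?_⟩
    exact stab hρ hE (2 * m) (Metric.ball x δ) Metric.isOpen_ball
      (fun a ha => hfibeq a (Metric.mem_ball.mp ha)) j y (Metric.mem_ball.mpr hyd)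

end GlaeserAux

open GlaeserAux in
/-- The fibre dimension of the saturation `Ê = ρ^[2r] E` is upper-semicontinuous. -/
theorem glaeser_saturation_dim_upperSemicontinuous {X V : Type*} [MetricSpace X]
    [NormedAddCommGroup V] [NormedSpace ℝ V] [FiniteDimensional ℝ V] {r : ℕ}
    (hr : Module.finrank ℝ V = r) (ρ : Set (X × V) → Set (X × V))
    (hρ : IsGlaeserOperation ρ) (E : Set (X × V)) (hE : IsBundle E) :
    ∀ a : X, ∃ δ > (0 : ℝ), ∀ x : X, dist x a < δ →
      Module.finrank ℝ (Submodule.span ℝ {v : V | (x, v) ∈ ρ^[2 * r] E}) ≤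
        Module.finrank ℝ (Submodule.span ℝ {v : V | (a, v) ∈ ρ^[2 * r] E}) := by
  intro a
  have hfe : dd (ρ^[2 * r + 2] E) a ≤ r := by
    rw [← hr]
    exact Submodule.finrank_le _
  obtain ⟨δ₁, hδ₁, hb₁⟩ := keyP hρ hE r a hfe
  have hfib : fib (ρ^[2 * r + 1] E) a = fib (ρ^[2 * r] E) a :=
    hb₁ a (by rw [dist_self]; exact hδ₁) 1
  obtain ⟨δ₂, hδ₂, hb₂⟩ := lemA hρ hE (2 * r) a
  refine ⟨δ₂, hδ₂, fun x hx => ?_⟩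
  have h1 : dd (ρ^[2 * r] E) x ≤ dd (ρ^[2 * r + 1] E) a := hb₂ x hx
  have h2 : dd (ρ^[2 * r + 1] E) a = dd (ρ^[2 * r] E) a := by
    show Module.finrank ℝ (Submodule.span ℝ (fib (ρ^[2 * r + 1] E) a)) = _
    rw [hfib]
    rfl
  exact le_trans h1 (le_of_eq h2)
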